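/- In an e-ring, two projections p,q commute (pq = qp) if and only if they are Mackey compatible in P, i.e., there exist projections p₁,q₁,d with d+p₁+q₁ ≤ 1, p = d+p₁, and q = d+q₁. -/
import Mathlib


/-- An e-ring: an associative unital ring `R` together with a set `E` of effects.
`E⁺` is the additive submonoid generated by `E` (the set of finite sums of effects). -/
structure ERing (R : Type*) [Ring R] where
  E : Set R
  zero_mem : (0:R) ∈ E
  one_mem : (1:R) ∈ E
  compl_mem : ∀ e ∈ E, 1 - e ∈ E
  ax_i : ∀ a ∈ AddSubmonoid.closure E, -a ∈ AddSubmonoid.closure E → a = 0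
  ax_ii : ∀ a ∈ AddSubmonoid.closure E, 1 - a ∈ AddSubmonoid.closure E → a ∈ E
  ax_iii : ∀ a ∈ AddSubmonoid.closure E, ∀ b ∈ AddSubmonoid.closure E,
    a * b = b * a → a * b ∈ AddSubmonoid.closure E
  ax_iv : ∀ a ∈ AddSubmonoid.closure E, ∀ b ∈ AddSubmonoid.closure E,
    a * b * a ∈ AddSubmonoid.closure E
  ax_v : ∀ a ∈ AddSubmonoid.closure E, ∀ b ∈ AddSubmonoid.closure E,
    a * b * a = 0 → a * b = 0 ∧ b * a = 0
  ax_vi : ∀ a ∈ AddSubmonoid.closure E, ∀ b ∈ AddSubmonoid.closure E,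
    (a - b) * (a - b) ∈ AddSubmonoid.closure E

namespace ERing

variable {R : Type*} [Ring R]

/-- The positive cone `E⁺`: all finite sums of effects. -/
def Ep (S : ERing R) : Set R := (AddSubmonoid.closure S.E : Set R)

/-- The directed group `G = E⁺ − E⁺` (as a subset of `R`). -/
def G (S : ERing R) : Set R := {x | ∃ a ∈ S.Ep, ∃ b ∈ S.Ep, x = a - b}

/-- The partial order with positive cone `E⁺`: `g ≤ h` iff `h − g ∈ E⁺`. -/
def le (S : ERing R) (g h : R) : Prop := h - g ∈ S.Ep

/-- The set of projections: idempotent elements of `G`. -/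
def P (S : ERing R) : Set R := {p | p ∈ S.G ∧ p * p = p}

end ERing

namespace ERing

variable {R : Type*} [Ring R]

lemma mem_Ep_of_mem_P (S : ERing R) {p : R} (hp : p ∈ S.P) :
    p ∈ AddSubmonoid.closure S.E := by
  obtain ⟨⟨a, ha, b, hb, hab⟩, hidem⟩ := hp
  have h := S.ax_vi a ha b hb
  rw [← hab, hidem] at h
  exact h

lemma compl_mem_Ep_of_mem_P (S : ERing R) {p : R} (hp : p ∈ S.P) :
    (1 - p) ∈ AddSubmonoid.closure S.E := by
  have hpE := S.mem_Ep_of_mem_P hp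
  have h1 : (1:R) ∈ AddSubmonoid.closure S.E := AddSubmonoid.subset_closure S.one_mem
  have h := S.ax_vi 1 h1 p hpE
  have hc : (1 - p) * (1 - p) = 1 - p := by
    have : (1 - p) * (1 - p) = 1 - p - p + p * p := by noncomm_ring
    rw [this, hp.2]; abel
  rwa [hc] at h

lemma ortho (S : ERing R) {a b : R} (ha : a ∈ AddSubmonoid.closure S.E)
    (hb : b ∈ AddSubmonoid.closure S.E) (ha2 : a * a = a)
    (hle : 1 - a - b ∈ AddSubmonoid.closure S.E) : a * b = 0 ∧ b * a = 0 := by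
  have h1 : a * b * a ∈ AddSubmonoid.closure S.E := S.ax_iv a ha b hb
  have h2 : a * (1 - a - b) * a ∈ AddSubmonoid.closure S.E := S.ax_iv a ha _ hle
  have h3 : a * (1 - a - b) * a = -(a * b * a) := by
    have e : a * (1 - a - b) * a = a * a - a * a * a - a * b * a := by noncomm_ring
    rw [e, ha2, ha2]; abel
  rw [h3] at h2
  exact S.ax_v a ha b hb (S.ax_i _ h1 h2)

end ERing

theorem stmt17 {R : Type*} [Ring R] (S : ERing R) :
    ∀ p ∈ S.P, ∀ q ∈ S.P,
      (p * q = q * p ↔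
        ∃ d ∈ S.P, ∃ p₁ ∈ S.P, ∃ q₁ ∈ S.P,
          S.le (d + p₁ + q₁) 1 ∧ p = d + p₁ ∧ q = d + q₁) := by
  intro p hp q hq
  have hpE := S.mem_Ep_of_mem_P hp
  have hqE := S.mem_Ep_of_mem_P hq
  have hpE' := S.compl_mem_Ep_of_mem_P hp
  have hqE' := S.compl_mem_Ep_of_mem_P hq
  have hp2 := hp.2
  have hq2 := hq.2
  constructor
  · intro hcomm
    -- d = p*q, p₁ = p - p*q, q₁ = q - p*q
    have hdE : p * q ∈ AddSubmonoid.closure S.E := S.ax_iii p hpE q hqE hcomm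
    have hd2 : (p * q) * (p * q) = p * q := by
      calc (p * q) * (p * q) = p * (q * p) * q := by noncomm_ring
        _ = p * (p * q) * q := by rw [hcomm]
        _ = (p * p) * (q * q) := by noncomm_ring
        _ = p * q := by rw [hp2, hq2]
    have hGd : p * q ∈ S.G := ⟨p * q, hdE, 0, AddSubmonoid.zero_mem _, by simp⟩
    have hp1comm : p * (1 - q) = (1 - q) * p := by
      have : p * (1 - q) = p - p * q := by noncomm_ring
      rw [this, hcomm]; noncomm_ring
    have hp1E : p - p * q ∈ AddSubmonoid.closure S.E := by
      have h := S.ax_iii p hpE (1 - q) hqE' hp1comm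
      have e : p * (1 - q) = p - p * q := by noncomm_ring
      rwa [e] at h
    have hq1comm : q * (1 - p) = (1 - p) * q := by
      have : q * (1 - p) = q - q * p := by noncomm_ring
      rw [this, ← hcomm]; noncomm_ring
    have hq1E : q - p * q ∈ AddSubmonoid.closure S.E := by
      have h := S.ax_iii q hqE (1 - p) hpE' hq1comm
      have e : q * (1 - p) = q - p * q := by rw [mul_sub, mul_one, hcomm]
      rwa [e] at h
    have hp12 : (p - p * q) * (p - p * q) = p - p * q := by
      have e : (p - p * q) * (p - p * q)
          = p * p - p * (p * q) - p * q * p + (p * q) * (p * q) := by noncomm_ring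
      rw [e, hd2, hp2]
      have e1 : p * (p * q) = p * q := by rw [← mul_assoc, hp2]
      have e2 : p * q * p = p * q := by rw [hcomm, mul_assoc, hp2]
      rw [e1, e2]; abel
    have hq12 : (q - p * q) * (q - p * q) = q - p * q := by
      have e : (q - p * q) * (q - p * q)
          = q * q - q * (p * q) - p * q * q + (p * q) * (p * q) := by noncomm_ring
      rw [e, hd2, hq2]
      have e1 : q * (p * q) = p * q := by rw [← mul_assoc, ← hcomm, mul_assoc, hq2]
      have e2 : p * q * q = p * q := by rw [mul_assoc, hq2]
      rw [e1, e2]; abel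
    refine ⟨p * q, ⟨hGd, hd2⟩, p - p * q,
      ⟨⟨p - p * q, hp1E, 0, AddSubmonoid.zero_mem _, by simp⟩, hp12⟩,
      q - p * q, ⟨⟨q - p * q, hq1E, 0, AddSubmonoid.zero_mem _, by simp⟩, hq12⟩, ?_, by abel, by abel⟩
    · show 1 - (p * q + (p - p * q) + (q - p * q)) ∈ S.Ep
      have e : 1 - (p * q + (p - p * q) + (q - p * q)) = (1 - p) * (1 - q) := by
        have : (1 - p) * (1 - q) = 1 - p - q + p * q := by noncomm_ring
        rw [this]; abel
      rw [e]
      refine S.ax_iii _ hpE' _ hqE' ?_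
      have : (1 - p) * (1 - q) = 1 - p - q + p * q := by noncomm_ring
      rw [this, hcomm]; noncomm_ring
  · rintro ⟨d, hd, p₁, hp₁, q₁, hq₁, hle1, rfl, rfl⟩
    have hdE := S.mem_Ep_of_mem_P hd
    have hp₁E := S.mem_Ep_of_mem_P hp₁
    have hq₁E := S.mem_Ep_of_mem_P hq₁
    have hle1' : 1 - (d + p₁ + q₁) ∈ AddSubmonoid.closure S.E := hle1
    have hdp : d * p₁ = 0 ∧ p₁ * d = 0 := by
      refine S.ortho hdE hp₁E hd.2 ?_
      have : 1 - d - p₁ = (1 - (d + p₁ + q₁)) + q₁ := by abel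
      rw [this]; exact AddSubmonoid.add_mem _ hle1' hq₁E
    have hdq : d * q₁ = 0 ∧ q₁ * d = 0 := by
      refine S.ortho hdE hq₁E hd.2 ?_
      have : 1 - d - q₁ = (1 - (d + p₁ + q₁)) + p₁ := by abel
      rw [this]; exact AddSubmonoid.add_mem _ hle1' hp₁E
    have hpq : p₁ * q₁ = 0 ∧ q₁ * p₁ = 0 := by
      refine S.ortho hp₁E hq₁E hp₁.2 ?_
      have : 1 - p₁ - q₁ = (1 - (d + p₁ + q₁)) + d := by abel
      rw [this]; exact AddSubmonoid.add_mem _ hle1' hdE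
    have e1 : (d + p₁) * (d + q₁) = d * d + d * q₁ + p₁ * d + p₁ * q₁ := by noncomm_ring
    have e2 : (d + q₁) * (d + p₁) = d * d + d * p₁ + q₁ * d + q₁ * p₁ := by noncomm_ring
    rw [e1, e2, hdp.1, hdp.2, hdq.1, hdq.2, hpq.1, hpq.2]
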